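/- Let Γ = G *_φ H be the free product of groups G and H with amalgamated subgroups A ≤ G and B ≤ H with respect to an isomorphism φ : A → B, and let G′ ≤ G and H′ ≤ H be subgroups with G′ ∩ A and H′ ∩ B both trivial. If moreover G′ is a free group of rank r₁ and H′ is a free group of rank r₂, then the subgroup Γ′ = ⟨G′, H′⟩ of Γ generated by the images of G′ and H′ is a free group of rank r = r₁ + r₂. -/

import Mathlib

open Monoid

/-- The relator set `{a · φ(a)⁻¹ : a ∈ A}` identifying `A ≤ G` with `B ≤ H` inside the free
product `G ∗ H`. -/
def amalgRels {G H : Type} [Group G] [Group H] (A : Subgroup G) (B : Subgroup H)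
    (φ : A ≃* B) : Set (Coprod G H) :=
  {w | ∃ a : A, w = Coprod.inl (a : G) * (Coprod.inr ((φ a : H)))⁻¹}

/-- The free product `G ∗_φ H` of `G` and `H` with the subgroups `A ≤ G` and `B ≤ H` amalgamated
along the isomorphism `φ : A → B`, i.e. `⟨G, H | a = φ(a) for all a ∈ A⟩`. -/
abbrev Amalg {G H : Type} [Group G] [Group H] (A : Subgroup G) (B : Subgroup H)
    (φ : A ≃* B) : Type :=
  Coprod G H ⧸ Subgroup.normalClosure (amalgRels A B φ)

/-- The canonical homomorphism `G →* G ∗_φ H`. -/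
def Amalg.inlHom {G H : Type} [Group G] [Group H] (A : Subgroup G) (B : Subgroup H)
    (φ : A ≃* B) : G →* Amalg A B φ :=
  (QuotientGroup.mk' _).comp Coprod.inl

/-- The canonical homomorphism `H →* G ∗_φ H`. -/
def Amalg.inrHom {G H : Type} [Group G] [Group H] (A : Subgroup G) (B : Subgroup H)
    (φ : A ≃* B) : H →* Amalg A B φ :=
  (QuotientGroup.mk' _).comp Coprod.inr

section Aux

variable {G H : Type} [Group G] [Group H]

/-- The two-element family of groups `G, H` indexed by `Bool`. -/
abbrev amalgFam (G H : Type) [Group G] [Group H] : Bool → Type :=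
  fun b => Bool.rec H G b

instance amalgFamGroup : ∀ b, Group (amalgFam G H b) := fun b => by
  cases b
  · exact (inferInstance : Group H)
  · exact (inferInstance : Group G)

variable (A : Subgroup G) (B : Subgroup H) (φ : A ≃* B)

/-- The maps from the base group `A` into the family. -/
def amalgφ' : ∀ b, ↥A →* amalgFam G H b :=
  fun b => Bool.rec (B.subtype.comp φ.toMonoidHom) A.subtype b

theorem amalgφ'_injective : ∀ b, Function.Injective (amalgφ' A B φ b) := by
  intro b
  cases b
  · exact B.subtype_injective.comp φ.injective
  · exact A.subtype_injective

/-- The underlying map `Coprod G H →* PushoutI`. -/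
def amalgF : Coprod G H →* PushoutI (amalgφ' A B φ) :=
  Coprod.lift (PushoutI.of (φ := amalgφ' A B φ) true) (PushoutI.of (φ := amalgφ' A B φ) false)

theorem amalgRels_subset_ker : amalgRels A B φ ⊆ (amalgF A B φ).ker := by
  rintro _ ⟨a, rfl⟩
  have h1 : (amalgF A B φ) (Coprod.inl (a : G) * (Coprod.inr ((φ a : H)))⁻¹)
      = PushoutI.of (φ := amalgφ' A B φ) true (a : G) *
        (PushoutI.of (φ := amalgφ' A B φ) false ((φ a : H)))⁻¹ := by
    simp [amalgF, Coprod.lift_apply_inl, Coprod.lift_apply_inr]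
  have h2 : PushoutI.of (φ := amalgφ' A B φ) true (a : G) = PushoutI.base (amalgφ' A B φ) a :=
    PushoutI.of_apply_eq_base (amalgφ' A B φ) true a
  have h3 : PushoutI.of (φ := amalgφ' A B φ) false ((φ a : H)) = PushoutI.base (amalgφ' A B φ) a :=
    PushoutI.of_apply_eq_base (amalgφ' A B φ) false a
  simp only [SetLike.mem_coe, MonoidHom.mem_ker, h1, h2, h3, mul_inv_cancel]

/-- The comparison map from `Amalg` to `PushoutI`. -/
def amalgToPushout : Amalg A B φ →* PushoutI (amalgφ' A B φ) :=
  QuotientGroup.lift _ (amalgF A B φ)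
    (fun _ hw => Subgroup.normalClosure_le_normal (amalgRels_subset_ker A B φ) hw)

theorem amalgToPushout_inl (g : G) :
    amalgToPushout A B φ (Amalg.inlHom A B φ g) = PushoutI.of (φ := amalgφ' A B φ) true g := by
  simp only [amalgToPushout, Amalg.inlHom, MonoidHom.comp_apply, QuotientGroup.lift_mk']
  exact Coprod.lift_apply_inl (PushoutI.of (φ := amalgφ' A B φ) true) (PushoutI.of (φ := amalgφ' A B φ) false) g

theorem amalgToPushout_inr (h : H) :
    amalgToPushout A B φ (Amalg.inrHom A B φ h) = PushoutI.of (φ := amalgφ' A B φ) false h := by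
  simp only [amalgToPushout, Amalg.inrHom, MonoidHom.comp_apply, QuotientGroup.lift_mk']
  exact Coprod.lift_apply_inr (PushoutI.of (φ := amalgφ' A B φ) true) (PushoutI.of (φ := amalgφ' A B φ) false) h

variable (G' : Subgroup G) (H' : Subgroup H)

/-- The family of subgroups `G', H'`. -/
abbrev amalgSubFam : Bool → Type := fun b => Bool.rec (↥H') (↥G') b

instance amalgSubFamGroup : ∀ b, Group (amalgSubFam G' H' b) := fun b => by
  cases b
  · exact (inferInstance : Group ↥H')
  · exact (inferInstance : Group ↥G')

/-- inclusions of the subgroups into the family members. -/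
def amalgIncl : ∀ b, amalgSubFam G' H' b →* amalgFam G H b :=
  fun b => Bool.rec H'.subtype G'.subtype b

theorem amalgIncl_injective : ∀ b, Function.Injective (amalgIncl G' H' b) := by
  intro b
  cases b
  · exact H'.subtype_injective
  · exact G'.subtype_injective

/-- letterwise inclusion of words. -/
def amalgLetter (l : Σ b, amalgSubFam G' H' b) : Σ b, amalgFam G H b :=
  ⟨l.1, amalgIncl G' H' l.1 l.2⟩

/-- The map from the abstract free product of `G'` and `H'` into the pushout. -/
def amalgπ : CoprodI (amalgSubFam G' H') →* PushoutI (amalgφ' A B φ) :=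
  CoprodI.lift (fun b => (PushoutI.of (φ := amalgφ' A B φ) b).comp (amalgIncl G' H' b))

theorem amalgπ_injective (hA : G' ⊓ A = ⊥) (hB : H' ⊓ B = ⊥) :
    Function.Injective (amalgπ A B φ G' H') := by
  classical
  rw [injective_iff_map_eq_one]
  intro x hx
  set w : CoprodI.Word (amalgSubFam G' H') := CoprodI.Word.equiv x with hw
  have hxw : x = w.prod := (CoprodI.Word.equiv.symm_apply_apply x).symm
  let w' : CoprodI.Word (amalgFam G H) :=
    { toList := w.toList.map (amalgLetter G' H')
      ne_one := by
        intro l hl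
        obtain ⟨⟨b₀, g₀⟩, hl₀, rfl⟩ := List.mem_map.mp hl
        have hne := w.ne_one _ hl₀
        cases b₀
        · exact fun h1 => hne (Subtype.ext h1)
        · exact fun h1 => hne (Subtype.ext h1)
      chain_ne := by
        refine List.isChain_map_of_isChain _ ?_ w.chain_ne
        intro a b hab
        exact hab }
  have hred : PushoutI.Reduced (amalgφ' A B φ) w' := by
    intro l hl
    obtain ⟨⟨b₀, g₀⟩, hl₀, rfl⟩ := List.mem_map.mp hl
    have hne := w.ne_one _ hl₀
    cases b₀ with
    | false =>
      rintro ⟨a, ha⟩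
      apply hne
      have haH : (φ a : H) = (g₀ : H) := ha
      have hmem : (g₀ : H) ∈ H' ⊓ B := ⟨g₀.2, by rw [← haH]; exact (φ a).2⟩
      rw [hB] at hmem
      exact Subtype.ext (Subgroup.mem_bot.mp hmem)
    | true =>
      rintro ⟨a, ha⟩
      apply hne
      have haG : (a : G) = (g₀ : G) := ha
      have hmem : (g₀ : G) ∈ G' ⊓ A := ⟨g₀.2, by rw [← haG]; exact a.2⟩
      rw [hA] at hmem
      exact Subtype.ext (Subgroup.mem_bot.mp hmem)
  have hprod : PushoutI.ofCoprodI (φ := amalgφ' A B φ) w'.prod = amalgπ A B φ G' H' w.prod := by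
    show PushoutI.ofCoprodI (φ := amalgφ' A B φ)
        (List.prod ((w.toList.map (amalgLetter G' H')).map fun l => CoprodI.of l.snd))
      = amalgπ A B φ G' H' (List.prod (w.toList.map fun l => CoprodI.of l.snd))
    rw [List.map_map, map_list_prod, map_list_prod, List.map_map, List.map_map]
    congr 1
  have hempty : w' = CoprodI.Word.empty := by
    apply hred.eq_empty_of_mem_range (amalgφ'_injective A B φ)
    rw [hprod, ← hxw, hx]
    exact one_mem _
  have hnil : w.toList = [] := by
    have h := congrArg CoprodI.Word.toList hempty
    simpa only [w', CoprodI.Word.empty, List.map_eq_nil_iff] using h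
  have hwe : w = CoprodI.Word.empty := CoprodI.Word.ext hnil
  rw [hxw, hwe, CoprodI.Word.prod_empty]

/-- index family -/
abbrev amalgIdx (ι₁ ι₂ : Type) : Bool → Type := fun b => Bool.rec ι₂ ι₁ b

/-- the sigma type over the index family is a sum type -/
def amalgIdxEquiv (ι₁ ι₂ : Type) : (Σ b, amalgIdx ι₁ ι₂ b) ≃ ι₁ ⊕ ι₂ where
  toFun p := Bool.rec (motive := fun b => amalgIdx ι₁ ι₂ b → ι₁ ⊕ ι₂) Sum.inr Sum.inl p.1 p.2
  invFun s := Sum.elim (fun i => ⟨true, i⟩) (fun j => ⟨false, j⟩) s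
  left_inv := by rintro ⟨b, x⟩; cases b <;> rfl
  right_inv := by rintro (i | j) <;> rfl

/-- a free group basis for the free product of `G'` and `H'` -/
def amalgBasis {ι₁ ι₂ : Type} (e₁ : ↥G' ≃* FreeGroup ι₁) (e₂ : ↥H' ≃* FreeGroup ι₂) :
    FreeGroupBasis (ι₁ ⊕ ι₂) (CoprodI (amalgSubFam G' H')) :=
  (CoprodI.FreeGroupBasis.coprodI (X := amalgIdx ι₁ ι₂) (fun b =>
      Bool.rec (motive := fun b => FreeGroupBasis (amalgIdx ι₁ ι₂ b) (amalgSubFam G' H' b))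
        (.ofRepr e₂) (.ofRepr e₁) b)).reindex (amalgIdxEquiv ι₁ ι₂)

theorem amalgBasis_inl {ι₁ ι₂ : Type} (e₁ : ↥G' ≃* FreeGroup ι₁) (e₂ : ↥H' ≃* FreeGroup ι₂)
    (i : ι₁) :
    (amalgBasis G' H' e₁ e₂).repr.symm (FreeGroup.of (Sum.inl i)) =
      CoprodI.of (M := amalgSubFam G' H') (i := true) (e₁.symm (FreeGroup.of i)) := by
  show (amalgBasis G' H' e₁ e₂) (Sum.inl i) = _
  rw [amalgBasis, FreeGroupBasis.reindex_apply]
  show (CoprodI.FreeGroupBasis.coprodI _).repr.symm (FreeGroup.of ((amalgIdxEquiv ι₁ ι₂).symm (Sum.inl i))) = _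
  simp [CoprodI.FreeGroupBasis.coprodI, amalgIdxEquiv, FreeGroupBasis.ofRepr, MonoidHom.toMulEquiv]
  rfl

theorem amalgBasis_inr {ι₁ ι₂ : Type} (e₁ : ↥G' ≃* FreeGroup ι₁) (e₂ : ↥H' ≃* FreeGroup ι₂)
    (j : ι₂) :
    (amalgBasis G' H' e₁ e₂).repr.symm (FreeGroup.of (Sum.inr j)) =
      CoprodI.of (M := amalgSubFam G' H') (i := false) (e₂.symm (FreeGroup.of j)) := by
  show (amalgBasis G' H' e₁ e₂) (Sum.inr j) = _
  rw [amalgBasis, FreeGroupBasis.reindex_apply]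
  show (CoprodI.FreeGroupBasis.coprodI _).repr.symm (FreeGroup.of ((amalgIdxEquiv ι₁ ι₂).symm (Sum.inr j))) = _
  simp [CoprodI.FreeGroupBasis.coprodI, amalgIdxEquiv, FreeGroupBasis.ofRepr, MonoidHom.toMulEquiv]
  rfl

end Aux

/-- **Corollary (2).**  Let `Γ = G ∗_φ H` with amalgamated subgroups `A ≤ G`, `B ≤ H` along
`φ : A ≃ B`, and let `G′ ≤ G`, `H′ ≤ H` be subgroups with `G′ ∩ A` and `H′ ∩ B` both trivial.
If moreover `G′` is a free group of rank `r₁` (i.e. isomorphic to the free group on an index type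
`ι₁` of cardinality `r₁`) and `H′` is free of rank `r₂` (on an index type `ι₂`), then the
subgroup `Γ′ = ⟨G′, H′⟩` of `Γ` is a free group of rank `r₁ + r₂`, i.e. isomorphic to the free
group on `ι₁ ⊕ ι₂`. -/
theorem amalg_subgroup_free_of_rank_sum {G H : Type} [Group G] [Group H]
    (A : Subgroup G) (B : Subgroup H) (φ : A ≃* B)
    (G' : Subgroup G) (H' : Subgroup H)
    (hA : G' ⊓ A = ⊥) (hB : H' ⊓ B = ⊥)
    (ι₁ ι₂ : Type) (e₁ : G' ≃* FreeGroup ι₁) (e₂ : H' ≃* FreeGroup ι₂) :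
    Nonempty
      ((↥(G'.map (Amalg.inlHom A B φ) ⊔ H'.map (Amalg.inrHom A B φ)))
        ≃* FreeGroup (ι₁ ⊕ ι₂)) := by
  classical
  set f₁ : ι₁ → Amalg A B φ :=
    fun i => Amalg.inlHom A B φ ((e₁.symm (FreeGroup.of i) : G') : G) with hf₁
  set f₂ : ι₂ → Amalg A B φ :=
    fun j => Amalg.inrHom A B φ ((e₂.symm (FreeGroup.of j) : H') : H) with hf₂
  set ψ : FreeGroup (ι₁ ⊕ ι₂) →* Amalg A B φ := FreeGroup.lift (Sum.elim f₁ f₂) with hψ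
  set ρ : FreeGroup (ι₁ ⊕ ι₂) ≃* CoprodI (amalgSubFam G' H') :=
    (amalgBasis G' H' e₁ e₂).repr.symm with hρ
  -- the key commutative square
  have hcomm : (amalgToPushout A B φ).comp ψ =
      (amalgπ A B φ G' H').comp ρ.toMonoidHom := by
    apply FreeGroup.ext_hom
    rintro (i | j)
    · have h1 : ρ (FreeGroup.of (Sum.inl i)) =
          CoprodI.of (M := amalgSubFam G' H') (i := true) (e₁.symm (FreeGroup.of i)) :=
        amalgBasis_inl G' H' e₁ e₂ i
      simp only [MonoidHom.comp_apply, MulEquiv.coe_toMonoidHom, h1, hψ, FreeGroup.lift_apply_of,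
        Sum.elim_inl, hf₁, amalgπ, CoprodI.lift_of, MonoidHom.comp_apply]
      exact amalgToPushout_inl A B φ _
    · have h1 : ρ (FreeGroup.of (Sum.inr j)) =
          CoprodI.of (M := amalgSubFam G' H') (i := false) (e₂.symm (FreeGroup.of j)) :=
        amalgBasis_inr G' H' e₁ e₂ j
      simp only [MonoidHom.comp_apply, MulEquiv.coe_toMonoidHom, h1, hψ, FreeGroup.lift_apply_of,
        Sum.elim_inr, hf₂, amalgπ, CoprodI.lift_of, MonoidHom.comp_apply]
      exact amalgToPushout_inr A B φ _
  -- injectivity of ψ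
  have hψinj : Function.Injective ψ := by
    have h2 : Function.Injective ((amalgToPushout A B φ).comp ψ) := by
      rw [hcomm]
      rw [MonoidHom.coe_comp]
      exact (amalgπ_injective A B φ G' H' hA hB).comp ρ.injective
    rw [MonoidHom.coe_comp] at h2
    exact Function.Injective.of_comp h2
  -- range of ψ
  have hrange : ψ.range = G'.map (Amalg.inlHom A B φ) ⊔ H'.map (Amalg.inrHom A B φ) := by
    have hψr : ψ.range = Subgroup.closure (Set.range f₁ ∪ Set.range f₂) := by
      rw [MonoidHom.range_eq_map, ← FreeGroup.closure_range_of (ι₁ ⊕ ι₂),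
        MonoidHom.map_closure, ← Set.range_comp]
      congr 1
      rw [← Set.Sum.elim_range]
      exact congrArg Set.range (funext fun s => by cases s <;> simp [hψ])
    have hmap : ∀ {K : Type} [Group K] (K' : Subgroup K) {ι : Type}
        (e : K' ≃* FreeGroup ι) (χ : K →* Amalg A B φ),
        K'.map χ = Subgroup.closure (Set.range fun i => χ ((e.symm (FreeGroup.of i) : K') : K)) := by
      intro K _ K' ι e χ
      have h1 : (⊤ : Subgroup (FreeGroup ι)).map (K'.subtype.comp e.symm.toMonoidHom) = K' := by
        rw [← MonoidHom.range_eq_map, MonoidHom.range_comp,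
          MonoidHom.range_eq_top_of_surjective e.symm.toMonoidHom e.symm.surjective,
          ← MonoidHom.range_eq_map, Subgroup.range_subtype]
      conv_lhs => rw [← h1]
      rw [Subgroup.map_map, ← MonoidHom.range_eq_map, MonoidHom.range_eq_map,
        ← FreeGroup.closure_range_of ι, MonoidHom.map_closure, ← Set.range_comp]
      rfl
    rw [hψr, Subgroup.closure_union, hmap G' e₁ (Amalg.inlHom A B φ),
      hmap H' e₂ (Amalg.inrHom A B φ)]
  exact ⟨(MulEquiv.subgroupCongr hrange.symm).trans (MonoidHom.ofInjective hψinj).symm⟩
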